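/- Let n > 2, let g be a symmetric positive definite n×n real matrix and P a symmetric n×n real matrix, and for x ∈ ℝ set g_x := g − x²·P + (x⁴/4)·P·g⁻¹·P. Then there exists ε > 0 such that for all x with |x| < ε one has det(g_x) > 0 and ( det(g_x) / det(g) )^{1/2} = Σ_{k=0}^{n} (−2)^{−k} · σ_k(g⁻¹P) · x^{2k}, where σ_k(A) denotes the sum over all subsets S of Fin n of cardinality k of the determinants of the principal submatrices of A with rows and columns indexed by S (with σ_0(A) = 1). -/

import Mathlib

/-- `σ_k(A)`: the sum of the principal `k × k` minors of the matrix `A`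
(with `σ_0(A) = 1`). -/
def principalMinorSum {n : ℕ} (k : ℕ) (A : Matrix (Fin n) (Fin n) ℝ) : ℝ :=
  ∑ S ∈ Finset.powersetCard k (Finset.univ : Finset (Fin n)),
    Matrix.det (fun i j : S => A i.1 j.1)

/-- The determinant of the matrix whose rows in `s` come from `M` and whose other
rows come from the identity matrix is the principal minor of `M` indexed by `s`. -/
lemma det_piecewise_one {n : ℕ} (M : Matrix (Fin n) (Fin n) ℝ) (s : Finset (Fin n)) :
    Matrix.det (Matrix.of (s.piecewise (fun i => M i)
        (fun i => (1 : Matrix (Fin n) (Fin n) ℝ) i))) =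
      Matrix.det (fun i j : s => M i.1 j.1) := by
  classical
  let e : {a : Fin n // a ∈ s} ⊕ {a : Fin n // ¬ a ∈ s} ≃ Fin n := Equiv.sumCompl (· ∈ s)
  rw [← Matrix.det_submatrix_equiv_self e]
  have heq : (Matrix.of (s.piecewise (fun i => M i)
        (fun i => (1 : Matrix (Fin n) (Fin n) ℝ) i))).submatrix e e =
      Matrix.fromBlocks (Matrix.of fun i j : s => M i.1 j.1)
        (Matrix.of fun (i : s) (j : {a : Fin n // ¬ a ∈ s}) => M i.1 j.1) 0 1 := by
    ext i j
    cases i with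
    | inl i =>
      cases j with
      | inl j =>
        simp [e, Matrix.submatrix_apply, Finset.piecewise_eq_of_mem _ _ _ i.2]
      | inr j =>
        simp [e, Matrix.submatrix_apply, Finset.piecewise_eq_of_mem _ _ _ i.2]
    | inr i =>
      cases j with
      | inl j =>
        have hne : i.1 ≠ j.1 := fun h => i.2 (h ▸ j.2)
        simp [e, Matrix.submatrix_apply, Finset.piecewise_eq_of_notMem _ _ _ i.2,
          Matrix.one_apply_ne hne]
      | inr j =>
        simp only [Matrix.submatrix_apply, e, Equiv.sumCompl_apply_inr, Matrix.of_apply,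
          Finset.piecewise_eq_of_notMem _ _ _ i.2, Matrix.fromBlocks_apply₂₂]
        rw [Matrix.one_apply, Matrix.one_apply]
        simp [Subtype.ext_iff]
  rw [heq, Matrix.det_fromBlocks_zero₂₁, Matrix.det_one, mul_one]
  rfl

/-- Expansion of `det (1 + t • M)` in terms of sums of principal minors. -/
lemma det_one_add_smul_expand {n : ℕ} (t : ℝ) (M : Matrix (Fin n) (Fin n) ℝ) :
    (1 + t • M).det =
      ∑ k ∈ Finset.range (n + 1), principalMinorSum k M * t ^ k := by
  classical
  set f := (Matrix.detRowAlternating :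
    (Fin n → ℝ) [⋀^Fin n]→ₗ[ℝ] ℝ).toMultilinearMap with hf
  have h0 : (1 + t • M).det = f ((fun i => t • M i) + (fun i => (1 : Matrix (Fin n) (Fin n) ℝ) i)) := by
    congr 1
    ext i j
    simp [Matrix.add_apply, Matrix.smul_apply, add_comm]
  rw [h0, f.map_add_univ]
  have hterm : ∀ s : Finset (Fin n),
      f (s.piecewise (fun i => t • M i) (fun i => (1 : Matrix (Fin n) (Fin n) ℝ) i)) =
        Matrix.det (fun i j : s => M i.1 j.1) * t ^ s.card := by
    intro s
    set m0 : Fin n → Fin n → ℝ :=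
      s.piecewise (fun i => M i) (fun i => (1 : Matrix (Fin n) (Fin n) ℝ) i) with hm0
    have hpw : s.piecewise (fun i => t • M i) (fun i => (1 : Matrix (Fin n) (Fin n) ℝ) i) =
        s.piecewise (fun i => t • m0 i) m0 := by
      funext i
      by_cases h : i ∈ s
      · simp [hm0, Finset.piecewise_eq_of_mem _ _ _ h]
      · simp [hm0, Finset.piecewise_eq_of_notMem _ _ _ h]
    rw [hpw, f.map_piecewise_smul (fun _ => t) m0 s]
    have : f m0 = Matrix.det (fun i j : s => M i.1 j.1) := det_piecewise_one M s
    rw [this]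
    simp [Finset.prod_const, mul_comm]
  rw [Finset.sum_congr rfl (fun s _ => hterm s)]
  have huniv : (Finset.univ : Finset (Finset (Fin n))) =
      (Finset.univ : Finset (Fin n)).powerset := (Finset.powerset_univ).symm
  rw [huniv, Finset.sum_powerset]
  rw [Finset.card_univ, Fintype.card_fin]
  refine Finset.sum_congr rfl fun k _ => ?_
  rw [principalMinorSum, Finset.sum_mul]
  refine Finset.sum_congr rfl fun S hS => ?_
  rw [(Finset.mem_powersetCard.mp hS).2]

theorem sqrt_det_poincare_expansion (n : ℕ) (hn : 2 < n)
    (g P : Matrix (Fin n) (Fin n) ℝ) (hg : g.PosDef) (hgs : g.IsSymm)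
    (hP : P.IsSymm) :
    ∃ ε > (0:ℝ), ∀ x : ℝ, |x| < ε →
      0 < (g - x ^ 2 • P + (x ^ 4 / 4) • (P * g⁻¹ * P)).det ∧
      Real.sqrt ((g - x ^ 2 • P + (x ^ 4 / 4) • (P * g⁻¹ * P)).det / g.det) =
        ∑ k ∈ Finset.range (n + 1),
          ((-2 : ℝ) ^ k)⁻¹ * principalMinorSum k (g⁻¹ * P) * x ^ (2 * k) := by
  classical
  have hdetg : 0 < g.det := hg.det_pos
  have hginv : g * g⁻¹ = 1 := Matrix.mul_nonsing_inv g (isUnit_iff_ne_zero.mpr hdetg.ne')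
  set M : Matrix (Fin n) (Fin n) ℝ := g⁻¹ * P with hM
  have hgM : g * M = P := by rw [hM, ← mul_assoc, hginv, one_mul]
  -- the polynomial (right hand side) as a function of x
  set rhs : ℝ → ℝ := fun x => ∑ k ∈ Finset.range (n + 1),
      ((-2 : ℝ) ^ k)⁻¹ * principalMinorSum k M * x ^ (2 * k) with hrhs
  -- key identity: det expansion for every x
  have hdexp : ∀ x : ℝ, (1 - (x ^ 2 / 2) • M).det = rhs x := by
    intro x
    have : (1 : Matrix (Fin n) (Fin n) ℝ) - (x ^ 2 / 2) • M
        = 1 + (-(x ^ 2 / 2)) • M := by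
      rw [neg_smul, sub_eq_add_neg]
    rw [this, det_one_add_smul_expand]
    refine Finset.sum_congr rfl fun k _ => ?_
    have h1 : (-(x ^ 2 / 2)) ^ k = ((-2 : ℝ) ^ k)⁻¹ * x ^ (2 * k) := by
      rw [pow_mul]
      rw [show (-(x ^ 2 / 2)) = ((-2 : ℝ))⁻¹ * x ^ 2 by ring]
      rw [mul_pow, inv_pow]
    rw [h1]; ring
  -- factorization of the matrix family
  have hfac : ∀ x : ℝ, g - x ^ 2 • P + (x ^ 4 / 4) • (P * g⁻¹ * P) =
      g * (1 - (x ^ 2 / 2) • M) * (1 - (x ^ 2 / 2) • M) := by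
    intro x
    have hPM : P * M = P * g⁻¹ * P := by rw [hM, mul_assoc]
    set c : ℝ := x ^ 2 / 2 with hc
    have h1 : g * ((1 : Matrix (Fin n) (Fin n) ℝ) - c • M) = g - c • P := by
      rw [mul_sub, mul_one, Matrix.mul_smul, hgM]
    have h2 : (c • P) * ((1 : Matrix (Fin n) (Fin n) ℝ) - c • M) =
        c • P - (c * c) • (P * g⁻¹ * P) := by
      rw [Matrix.smul_mul, mul_sub, mul_one, Matrix.mul_smul, hPM, smul_sub, smul_smul]
    rw [h1, sub_mul, h1, h2]
    rw [show c * c = x ^ 4 / 4 by rw [hc]; ring]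
    have h3 : (x ^ 2 : ℝ) • P = c • P + c • P := by
      rw [← add_smul, hc]; norm_num
    rw [h3]
    abel
  -- determinant factorization
  have hdet : ∀ x : ℝ, (g - x ^ 2 • P + (x ^ 4 / 4) • (P * g⁻¹ * P)).det =
      g.det * ((1 - (x ^ 2 / 2) • M).det * (1 - (x ^ 2 / 2) • M).det) := by
    intro x
    rw [hfac x, Matrix.det_mul, Matrix.det_mul, mul_assoc]
  -- rhs is continuous and rhs 0 = 1
  have hrhs0 : rhs 0 = 1 := by
    rw [← hdexp 0]
    simp
  have hcont : Continuous rhs := by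
    apply continuous_finset_sum
    intro k _
    exact (continuous_const.mul (continuous_pow _))
  have hnh : rhs ⁻¹' Set.Ioi (0 : ℝ) ∈ nhds (0 : ℝ) := by
    apply hcont.continuousAt.preimage_mem_nhds
    rw [hrhs0]
    exact Ioi_mem_nhds one_pos
  obtain ⟨ε, hε, hball⟩ := Metric.mem_nhds_iff.mp hnh
  refine ⟨ε, hε, fun x hx => ?_⟩
  have hxball : x ∈ Metric.ball (0 : ℝ) ε := by
    simpa [Real.dist_eq] using hx
  have hdx : 0 < rhs x := hball hxball
  have hdx' : 0 < (1 - (x ^ 2 / 2) • M).det := by rw [hdexp x]; exact hdx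
  constructor
  · rw [hdet x]
    positivity
  · have hdiv : g.det * ((1 - (x ^ 2 / 2) • M).det * (1 - (x ^ 2 / 2) • M).det) / g.det =
        (1 - (x ^ 2 / 2) • M).det * (1 - (x ^ 2 / 2) • M).det := by
      field_simp
    rw [hdet x, hdiv, Real.sqrt_mul_self hdx'.le, hdexp x]
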